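/- For every natural number n, the number of monotone Boolean functions of n+2 variables equals the number of quadruples (f₀,f₁,f₂,f₃) of monotone Boolean functions of n variables satisfying f₀ ≤ f₁ ≤ f₃ and f₀ ≤ f₂ ≤ f₃. -/

import Mathlib

/-- `D_n`, the poset of monotone Boolean functions of `n` variables. -/
abbrev DedekindPoset (n : ℕ) : Type := (Fin n → Bool) →o Bool

namespace DedekindAux

variable {n : ℕ}

lemma cons2 (x : Fin (n + 2) → Bool) :
    Fin.cons (x 0) (Fin.cons (x 1) (Fin.tail (Fin.tail x))) = x := by
  have h1 : x 1 = Fin.tail x 0 := (congrArg x Fin.succ_zero_eq_one).symm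
  rw [h1, Fin.cons_self_tail, Fin.cons_self_tail]

/-- Restrict a monotone function of `n+2` variables by fixing the first two. -/
def slice (f : DedekindPoset (n + 2)) (a b : Bool) : DedekindPoset n :=
  ⟨fun x => f (Fin.cons a (Fin.cons b x)), by
    intro x y hxy
    apply f.mono
    intro i
    refine Fin.cases ?_ (fun j => ?_) i
    · simp
    · refine Fin.cases ?_ (fun k => ?_) j <;> simp [hxy _]⟩

lemma slice_mono (f : DedekindPoset (n + 2)) {a a' b b' : Bool}
    (ha : a ≤ a') (hb : b ≤ b') : slice f a b ≤ slice f a' b' := by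
  intro x
  apply f.mono
  intro i
  refine Fin.cases ?_ (fun j => ?_) i
  · simpa using ha
  · refine Fin.cases ?_ (fun k => ?_) j <;> simp [hb]

/-- Select among four functions according to two booleans. -/
def sel (f₀ f₁ f₂ f₃ : DedekindPoset n) (a b : Bool) : DedekindPoset n :=
  bif a then (bif b then f₃ else f₂) else (bif b then f₁ else f₀)

lemma sel_mono {f₀ f₁ f₂ f₃ : DedekindPoset n}
    (h01 : f₀ ≤ f₁) (h13 : f₁ ≤ f₃) (h02 : f₀ ≤ f₂) (h23 : f₂ ≤ f₃)
    {a a' b b' : Bool} (ha : a ≤ a') (hb : b ≤ b') :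
    sel f₀ f₁ f₂ f₃ a b ≤ sel f₀ f₁ f₂ f₃ a' b' := by
  cases a <;> cases a' <;> cases b <;> cases b' <;>
    simp_all [sel] <;>
    first
      | exact h01 | exact h02 | exact h13 | exact h23
      | exact le_trans h01 h13 | exact le_refl _
      | exact absurd ha (by decide) | exact absurd hb (by decide)

lemma sel_slice (f : DedekindPoset (n + 2)) (a b : Bool) :
    sel (slice f false false) (slice f false true) (slice f true false)
      (slice f true true) a b = slice f a b := by
  cases a <;> cases b <;> rfl

/-- Reassemble a monotone function of `n+2` variables from a quadruple. -/
def glue (f₀ f₁ f₂ f₃ : DedekindPoset n)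
    (h01 : f₀ ≤ f₁) (h13 : f₁ ≤ f₃) (h02 : f₀ ≤ f₂) (h23 : f₂ ≤ f₃) :
    DedekindPoset (n + 2) :=
  ⟨fun x => sel f₀ f₁ f₂ f₃ (x 0) (x 1) (Fin.tail (Fin.tail x)), by
    intro x y hxy
    calc sel f₀ f₁ f₂ f₃ (x 0) (x 1) (Fin.tail (Fin.tail x))
        ≤ sel f₀ f₁ f₂ f₃ (y 0) (y 1) (Fin.tail (Fin.tail x)) :=
          sel_mono h01 h13 h02 h23 (hxy 0) (hxy 1) _
      _ ≤ sel f₀ f₁ f₂ f₃ (y 0) (y 1) (Fin.tail (Fin.tail y)) :=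
          (sel f₀ f₁ f₂ f₃ (y 0) (y 1)).mono (fun i => hxy _)⟩

lemma slice_glue (f₀ f₁ f₂ f₃ : DedekindPoset n)
    (h01 : f₀ ≤ f₁) (h13 : f₁ ≤ f₃) (h02 : f₀ ≤ f₂) (h23 : f₂ ≤ f₃) (a b : Bool) :
    slice (glue f₀ f₁ f₂ f₃ h01 h13 h02 h23) a b = sel f₀ f₁ f₂ f₃ a b := by
  ext x
  simp only [slice, glue, OrderHom.coe_mk]
  show sel f₀ f₁ f₂ f₃ ((Fin.cons a (Fin.cons b x) : Fin (n + 2) → Bool) 0)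
    ((Fin.cons a (Fin.cons b x) : Fin (n + 2) → Bool) 1)
    (Fin.tail (Fin.tail (Fin.cons a (Fin.cons b x) : Fin (n + 2) → Bool))) = sel f₀ f₁ f₂ f₃ a b x
  rw [Fin.cons_zero, ← Fin.succ_zero_eq_one, Fin.cons_succ, Fin.cons_zero,
    Fin.tail_cons, Fin.tail_cons]

/-- The structural equivalence `D_{n+2} ≃` quadruples. -/
def structEquiv (n : ℕ) :
    DedekindPoset (n + 2) ≃
      {q : DedekindPoset n × DedekindPoset n × DedekindPoset n × DedekindPoset n //
        q.1 ≤ q.2.1 ∧ q.2.1 ≤ q.2.2.2 ∧ q.1 ≤ q.2.2.1 ∧ q.2.2.1 ≤ q.2.2.2} where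
  toFun f :=
    ⟨(slice f false false, slice f false true, slice f true false, slice f true true),
      slice_mono f le_rfl (Bool.false_le _), slice_mono f (Bool.false_le _) le_rfl,
      slice_mono f (Bool.false_le _) le_rfl, slice_mono f le_rfl (Bool.false_le _)⟩
  invFun q := glue q.1.1 q.1.2.1 q.1.2.2.1 q.1.2.2.2 q.2.1 q.2.2.1 q.2.2.2.1 q.2.2.2.2
  left_inv f := by
    ext x
    show (sel (slice f false false) (slice f false true) (slice f true false)
      (slice f true true) (x 0) (x 1)) (Fin.tail (Fin.tail x)) = f x
    rw [sel_slice]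
    show f (Fin.cons (x 0) (Fin.cons (x 1) (Fin.tail (Fin.tail x)))) = f x
    rw [cons2]
  right_inv := by
    rintro ⟨⟨f₀, f₁, f₂, f₃⟩, h01, h13, h02, h23⟩
    apply Subtype.ext
    show (slice _ false false, slice _ false true, slice _ true false, slice _ true true)
      = (f₀, f₁, f₂, f₃)
    rw [slice_glue, slice_glue, slice_glue, slice_glue]
    rfl

end DedekindAux

open DedekindAux in
/-- `d_(n+2)` equals the number of quadruples `(f₀,f₁,f₂,f₃)` of monotone Boolean
functions of `n` variables with `f₀ ≤ f₁ ≤ f₃` and `f₀ ≤ f₂ ≤ f₃`. -/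
theorem dedekind_add_two_eq_card_quadruples (n : ℕ) :
    Nat.card (DedekindPoset (n + 2)) =
      Nat.card {q : DedekindPoset n × DedekindPoset n × DedekindPoset n × DedekindPoset n //
        q.1 ≤ q.2.1 ∧ q.2.1 ≤ q.2.2.2 ∧ q.1 ≤ q.2.2.1 ∧ q.2.2.1 ≤ q.2.2.2} :=
  Nat.card_congr (structEquiv n)
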